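/- Let $H$ be a connected solvable spherical subgroup of $G$ standardly embedded in $B$, and let $\alpha$ be an active root. Then all distinct roots of the family $F(\alpha) = \{\alpha\} \cup \{\beta \in \Psi \mid \alpha - \beta \in \Delta_+\}$ have pairwise distinct restrictions to the torus $S$, and these roots are linearly independent. -/

import Mathlib

open scoped InnerProductSpace

/-- A reduced crystallographic root system in a Euclidean space `V`, together with a chosen
base of simple roots and the (integer) coordinates of each root in this base. -/
structure RootSystemData (V : Type) [NormedAddCommGroup V] [InnerProductSpace ℝ V] where
  /-- the set of roots -/
  roots : Set V
  /-- the set of simple roots (the base) -/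
  simples : Finset V
  finite : roots.Finite
  ne_zero : ∀ α ∈ roots, α ≠ (0 : V)
  neg_mem : ∀ α ∈ roots, -α ∈ roots
  reduced : ∀ α ∈ roots, (2 : ℝ) • α ∉ roots
  reflect_mem : ∀ α ∈ roots, ∀ β ∈ roots,
    β - (2 * ⟪α, β⟫_ℝ / ⟪α, α⟫_ℝ) • α ∈ roots
  cartan_int : ∀ α ∈ roots, ∀ β ∈ roots, ∃ n : ℤ,
    2 * ⟪α, β⟫_ℝ / ⟪α, α⟫_ℝ = (n : ℝ)
  simples_mem : ∀ γ ∈ simples, γ ∈ roots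
  simples_indep : LinearIndependent ℝ (fun γ : simples => (γ : V))
  /-- `coeff α γ` is the coefficient of the simple root `γ` in the root `α` -/
  coeff : V → V → ℤ
  coeff_spec : ∀ α ∈ roots, α = ∑ γ ∈ simples, coeff α γ • γ
  coeff_sign : ∀ α ∈ roots,
    (∀ γ ∈ simples, 0 ≤ coeff α γ) ∨ (∀ γ ∈ simples, coeff α γ ≤ 0)

namespace RootSystemData

variable {V : Type} [NormedAddCommGroup V] [InnerProductSpace ℝ V]

/-- The set of positive roots with respect to the base. -/
def pos (R : RootSystemData V) : Set V :=
  {α ∈ R.roots | ∀ γ ∈ R.simples, 0 ≤ R.coeff α γ}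

/-- The support of a root: the simple roots occurring in it with nonzero coefficient. -/
def Supp (R : RootSystemData V) (α : V) : Finset V :=
  R.simples.filter fun γ => R.coeff α γ ≠ 0

/-- The height of a root: the sum of its coefficients over the simple roots. -/
def height (R : RootSystemData V) (α : V) : ℤ :=
  ∑ γ ∈ R.simples, R.coeff α γ

/-- `s(α)`: the number of unordered representations of `α` as a sum of two positive
roots. -/
noncomputable def numDecomp (R : RootSystemData V) (α : V) : ℕ :=
  {z : Sym2 V | ∃ β ∈ R.pos, ∃ γ ∈ R.pos, z = Sym2.mk β γ ∧ β + γ = α}.ncard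

lemma aux_inner_self_pos {x : V} (hx : x ≠ 0) : 0 < ⟪x, x⟫_ℝ := by
  rw [real_inner_self_eq_norm_mul_norm]
  have : 0 < ‖x‖ := norm_pos_iff.mpr hx
  positivity

/-- If two roots have positive inner product and are distinct, their difference is a root. -/
lemma sub_mem_of_inner_pos (R : RootSystemData V) {x y : V} (hx : x ∈ R.roots)
    (hy : y ∈ R.roots) (hpos : 0 < ⟪x, y⟫_ℝ) (hne : x ≠ y) : x - y ∈ R.roots := by
  obtain ⟨n, hn⟩ := R.cartan_int x hx y hy
  obtain ⟨m, hm⟩ := R.cartan_int y hy x hx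
  have hx0 : x ≠ 0 := R.ne_zero x hx
  have hy0 : y ≠ 0 := R.ne_zero y hy
  have hxx : 0 < ⟪x, x⟫_ℝ := aux_inner_self_pos hx0
  have hyy : 0 < ⟪y, y⟫_ℝ := aux_inner_self_pos hy0
  have hyx : ⟪y, x⟫_ℝ = ⟪x, y⟫_ℝ := real_inner_comm x y
  have hn' : 2 * ⟪x, y⟫_ℝ = (n : ℝ) * ⟪x, x⟫_ℝ := by
    field_simp at hn; linarith [hn]
  have hm' : 2 * ⟪x, y⟫_ℝ = (m : ℝ) * ⟪y, y⟫_ℝ := by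
    rw [hyx] at hm; field_simp at hm; linarith [hm]
  have hnr : 0 < (n : ℝ) := by nlinarith
  have hmr : 0 < (m : ℝ) := by nlinarith
  have hn1 : 1 ≤ n := by exact_mod_cast hnr
  have hm1 : 1 ≤ m := by exact_mod_cast hmr
  by_cases hne1 : n = 1
  · have hrefl := R.reflect_mem x hx y hy
    rw [hn, hne1] at hrefl
    have : y - x ∈ R.roots := by simpa using hrefl
    have := R.neg_mem _ this
    simpa using this
  · by_cases hme1 : m = 1
    · have hrefl := R.reflect_mem y hy x hx
      rw [hm, hme1] at hrefl
      simpa using hrefl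
    · exfalso
      have hn2 : 2 ≤ n := by omega
      have hm2 : 2 ≤ m := by omega
      have hcs := real_inner_mul_inner_self_le x y
      -- n*m ≤ 4 : from 4⟪x,y⟫² = n m ⟪x,x⟫⟪y,y⟫ ≤ 4⟪x,x⟫⟪y,y⟫
      have hprod : (n : ℝ) * (m : ℝ) ≤ 4 := by
        have h4 : (n : ℝ) * (m : ℝ) * (⟪x, x⟫_ℝ * ⟪y, y⟫_ℝ) ≤ 4 * (⟪x, x⟫_ℝ * ⟪y, y⟫_ℝ) := by
          nlinarith
        have hpos' : 0 < ⟪x, x⟫_ℝ * ⟪y, y⟫_ℝ := mul_pos hxx hyy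
        exact le_of_mul_le_mul_right (by linarith) hpos'
      have hnm : n = 2 ∧ m = 2 := by
        have : (n : ℤ) * m ≤ 4 := by exact_mod_cast hprod
        constructor <;> nlinarith
      have hxy1 : ⟪x, y⟫_ℝ = ⟪x, x⟫_ℝ := by
        rw [hnm.1] at hn'; push_cast at hn'; linarith
      have hxy2 : ⟪x, y⟫_ℝ = ⟪y, y⟫_ℝ := by
        rw [hnm.2] at hm'; push_cast at hm'; linarith
      have hz : x - y ≠ 0 := sub_ne_zero.mpr hne
      have : 0 < ⟪x - y, x - y⟫_ℝ := aux_inner_self_pos hz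
      rw [inner_sub_sub_self] at this
      rw [real_inner_comm y x] at this
      nlinarith

/-- If `x`, `x+η`, `x-η` are all roots then `±η` is a root. -/
lemma pm_mem_of_string (R : RootSystemData V) {x η : V} (hx : x ∈ R.roots) (hη : η ≠ 0)
    (h1 : x + η ∈ R.roots) (h2 : x - η ∈ R.roots) : η ∈ R.roots ∨ -η ∈ R.roots := by
  by_cases c1 : 0 < ⟪x, x + η⟫_ℝ
  · right
    have := R.sub_mem_of_inner_pos hx h1 c1 (fun h => hη (left_eq_add.mp h))
    simpa using this
  · by_cases c2 : 0 < ⟪x, x - η⟫_ℝ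
    · left
      have := R.sub_mem_of_inner_pos hx h2 c2 (by
        intro h
        apply hη
        have : x - (x - η) = 0 := by rw [← h]; abel
        simpa using this)
      simpa using this
    · exfalso
      push_neg at c1 c2
      rw [inner_add_right] at c1
      rw [inner_sub_right] at c2
      have hx0 : x ≠ 0 := R.ne_zero x hx
      have := aux_inner_self_pos hx0
      linarith

/-- Coefficients with respect to the simple roots are unique. -/
lemma coeffs_eq (R : RootSystemData V) {c d : V → ℤ}
    (h : ∑ γ ∈ R.simples, c γ • γ = ∑ γ ∈ R.simples, d γ • γ) :
    ∀ γ ∈ R.simples, c γ = d γ := by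
  have h0 : ∑ γ ∈ R.simples, (((c γ - d γ : ℤ) : ℝ)) • γ = 0 := by
    have hcongr : ∀ γ ∈ R.simples, (((c γ - d γ : ℤ) : ℝ)) • γ = c γ • γ - d γ • γ := by
      intro γ _
      rw [Int.cast_smul_eq_zsmul, sub_smul]
    rw [Finset.sum_congr rfl hcongr, Finset.sum_sub_distrib, h, sub_self]
  intro γ hγ
  have hli := linearIndependent_iff'.mp R.simples_indep Finset.univ
    (fun γ : R.simples => ((c γ - d γ : ℤ) : ℝ)) ?_ ⟨γ, hγ⟩ (Finset.mem_univ _)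
  · have : ((c γ - d γ : ℤ) : ℝ) = 0 := hli
    have : (c γ - d γ : ℤ) = 0 := by exact_mod_cast this
    omega
  · rw [Finset.sum_coe_sort R.simples (fun γ => ((c γ - d γ : ℤ) : ℝ) • γ)]
    exact h0

/-- Every root is positive or has positive negative. -/
lemma pos_or_neg_pos (R : RootSystemData V) {x : V} (hx : x ∈ R.roots) :
    x ∈ R.pos ∨ -x ∈ R.pos := by
  rcases R.coeff_sign x hx with h | h
  · exact Or.inl ⟨hx, h⟩
  · right
    refine ⟨R.neg_mem x hx, ?_⟩
    intro γ hγ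
    have key : R.coeff (-x) γ = -R.coeff x γ := by
      have hspec := R.coeff_spec (-x) (R.neg_mem x hx)
      have hspec2 : -x = ∑ γ ∈ R.simples, (-R.coeff x γ) • γ := by
        rw [show (∑ γ ∈ R.simples, (-R.coeff x γ) • γ) = -∑ γ ∈ R.simples, R.coeff x γ • γ by
          rw [← Finset.sum_neg_distrib]; exact Finset.sum_congr rfl fun γ _ => neg_smul _ _]
        rw [← R.coeff_spec x hx]
      exact R.coeffs_eq (hspec.symm.trans hspec2) γ hγ
    rw [key]
    have := h γ hγ
    omega

end RootSystemData

/-- The Lie-theoretic data attached to a connected solvable subgroup `H = S ⋉ N` of a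
connected semisimple complex algebraic group `G`, standardly embedded in a Borel subgroup
`B = T ⋉ U`:
* the root system of `G` with respect to `T`, with the base determined by `B`;
* the restriction map `τ : 𝔛(T) ⊗ ℚ → 𝔛(S) ⊗ ℚ` of characters from `T` to the maximal
  torus `S = H ∩ T` of `H` (modelled as a linear map of vector spaces, `W = 𝔛(S) ⊗ ℚ`);
* the nilpotent Lie algebra `L = 𝔲` of the maximal unipotent subgroup `U`, with its root
  space decomposition `𝔲 = ⨁_{α ∈ Δ₊} 𝔤_α`;
* the Lie algebra `𝔫 ⊆ 𝔲` of the unipotent radical `N = H ∩ U` of `H`, which is a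
  subalgebra and is a sum of its `S`-weight components. -/
structure SphericalSetup (V : Type) [NormedAddCommGroup V] [InnerProductSpace ℝ V]
    (W : Type) [AddCommGroup W] [Module ℝ W]
    (L : Type) [LieRing L] [LieAlgebra ℂ L] extends RootSystemData V where
  /-- restriction of characters from `T` to `S` -/
  τ : V →ₗ[ℝ] W
  /-- the root spaces `𝔤_α ⊆ 𝔲` -/
  g : V → Submodule ℂ L
  g_dim : ∀ α ∈ toRootSystemData.pos, Module.finrank ℂ (g α) = 1
  g_bot : ∀ α, α ∉ toRootSystemData.pos → g α = ⊥
  g_top : (⨆ α ∈ toRootSystemData.pos, g α) = (⊤ : Submodule ℂ L)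
  bracket_mem : ∀ (α β : V), ∀ x ∈ g α, ∀ y ∈ g β, ⁅x, y⁆ ∈ g (α + β)
  bracket_ne : ∀ α ∈ toRootSystemData.pos, ∀ β ∈ toRootSystemData.pos,
    α + β ∈ toRootSystemData.pos → ∃ x ∈ g α, ∃ y ∈ g β, ⁅x, y⁆ ≠ (0 : L)
  /-- the Lie algebra `𝔫` of the unipotent radical `N` of `H` -/
  n : Submodule ℂ L
  n_bracket : ∀ x ∈ n, ∀ y ∈ n, ⁅x, y⁆ ∈ n
  n_weight : n = ⨆ w : W, n ⊓ ⨆ α ∈ {a ∈ toRootSystemData.pos | τ a = w}, g α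

namespace SphericalSetup

variable {V : Type} [NormedAddCommGroup V] [InnerProductSpace ℝ V]
  {W : Type} [AddCommGroup W] [Module ℝ W]
  {L : Type} [LieRing L] [LieAlgebra ℂ L]

/-- The `S`-weight subspace `𝔲_w ⊆ 𝔲` of weight `w`. -/
def uSp (S : SphericalSetup V W L) (w : W) : Submodule ℂ L :=
  ⨆ α ∈ {a ∈ S.pos | S.τ a = w}, S.g α

/-- `c_w`: the codimension of `𝔫_w = 𝔫 ∩ 𝔲_w` in `𝔲_w`. -/
noncomputable def c (S : SphericalSetup V W L) (w : W) : ℕ :=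
  Module.finrank ℂ (S.uSp w) - Module.finrank ℂ ↥(S.n ⊓ S.uSp w)

/-- The sphericity of `H` in `G`, via the criterion of Theorem `solvable_spherical`:
`c_w ≤ 1` for every weight `w`, and the weights `w` with `c_w = 1` are linearly
independent in `𝔛(S) ⊗ ℚ`. -/
def Spherical (S : SphericalSetup V W L) : Prop :=
  (∀ w : W, S.c w ≤ 1) ∧
    LinearIndependent ℝ (fun w : {w : W // S.c w = 1} => (w : W))

/-- The set `Ψ` of active roots: positive roots `α` with `𝔤_α ⊄ 𝔫`. -/
def active (S : SphericalSetup V W L) : Set V :=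
  {α ∈ S.pos | ¬ S.g α ≤ S.n}

/-- The family `F(α)` of active roots generated by an active root `α`: the root `α`
together with all active roots subordinate to it. -/
def family (S : SphericalSetup V W L) (α : V) : Set V :=
  insert α {β ∈ S.active | α - β ∈ S.pos}

end SphericalSetup

section AuxLie

open SphericalSetup RootSystemData

variable {V : Type} [NormedAddCommGroup V] [InnerProductSpace ℝ V]
  {W : Type} [AddCommGroup W] [Module ℝ W]
  {L : Type} [LieRing L] [LieAlgebra ℂ L]

/-- The adjoint action of an element, as a linear map. -/
def adE (e : L) : L →ₗ[ℂ] L where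
  toFun x := ⁅e, x⁆
  map_add' := lie_add e
  map_smul' c x := by simp [lie_smul]

@[simp] lemma adE_apply (e x : L) : adE e x = ⁅e, x⁆ := rfl

variable (S : SphericalSetup V W L)

lemma g_le_uSp {μ : V} (h : μ ∈ S.pos) : S.g μ ≤ S.uSp (S.τ μ) := by
  apply le_biSup (f := fun α => S.g α)
  exact ⟨h, rfl⟩

lemma bracket_mem_uSp {e : L} {δ : V} (he : e ∈ S.g δ) {w : W} {x : L}
    (hx : x ∈ S.uSp w) : ⁅e, x⁆ ∈ S.uSp (S.τ δ + w) := by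
  refine Submodule.iSup_induction
    (fun μ : V => ⨆ _ : μ ∈ {a ∈ S.pos | S.τ a = w}, S.g μ)
    (motive := fun x => ⁅e, x⁆ ∈ S.uSp (S.τ δ + w)) hx ?_ (by simp) ?_
  · intro μ y hy
    by_cases hμ : μ ∈ {a ∈ S.pos | S.τ a = w}
    · simp only [iSup_pos hμ] at hy
      have hbr := S.bracket_mem δ μ e he y hy
      by_cases hp : δ + μ ∈ S.pos
      · have hle := g_le_uSp S hp
        have hτ : S.τ (δ + μ) = S.τ δ + w := by
          rw [map_add, hμ.2]
        rw [hτ] at hle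
        exact hle hbr
      · rw [S.g_bot _ hp] at hbr
        rw [Submodule.mem_bot] at hbr
        rw [hbr]; exact zero_mem _
    · simp only [iSup_neg hμ] at hy
      rw [Submodule.mem_bot] at hy
      rw [hy, lie_zero]; exact zero_mem _
  · intro a b ha hb
    rw [lie_add]; exact add_mem ha hb

lemma exists_notmem_n {β : V} (hβ : β ∈ S.active) :
    ∃ x ∈ S.g β, x ∉ S.n ∧ x ≠ 0 := by
  obtain ⟨x, hx, hxn⟩ := SetLike.not_le_iff_exists.mp hβ.2
  exact ⟨x, hx, hxn, fun h => hxn (h ▸ S.n.zero_mem)⟩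

lemma span_eq_g {μ : V} (hμ : μ ∈ S.pos) {x : L} (hx : x ∈ S.g μ) (hx0 : x ≠ 0) :
    Submodule.span ℂ {x} = S.g μ := by
  have : FiniteDimensional ℂ (S.g μ) := by
    apply FiniteDimensional.of_finrank_eq_succ (n := 0)
    simpa using S.g_dim μ hμ
  apply Submodule.eq_of_le_of_finrank_le
  · rw [Submodule.span_le]; simpa using hx
  · rw [finrank_span_singleton hx0, S.g_dim μ hμ]

lemma notmem_n_of_mem_g {μ : V} (hμpos : μ ∈ S.pos) (hμ : ¬ S.g μ ≤ S.n) {x : L}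
    (hx : x ∈ S.g μ) (hx0 : x ≠ 0) : x ∉ S.n := by
  intro hxn
  apply hμ
  rw [← span_eq_g S hμpos hx hx0, Submodule.span_le]
  simpa using hxn

lemma bracket_ne_zero {μ ν : V} (hμ : μ ∈ S.pos) (hν : ν ∈ S.pos) (hsum : μ + ν ∈ S.pos)
    {x y : L} (hx : x ∈ S.g μ) (hx0 : x ≠ 0) (hy : y ∈ S.g ν) (hy0 : y ≠ 0) :
    ⁅x, y⁆ ≠ 0 := by
  obtain ⟨x₀, hx₀, y₀, hy₀, hne⟩ := S.bracket_ne μ hμ ν hν hsum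
  rw [← span_eq_g S hμ hx hx0] at hx₀
  rw [← span_eq_g S hν hy hy0] at hy₀
  obtain ⟨a, rfl⟩ := Submodule.mem_span_singleton.mp hx₀
  obtain ⟨b, rfl⟩ := Submodule.mem_span_singleton.mp hy₀
  intro h
  apply hne
  rw [smul_lie, lie_smul, h, smul_zero, smul_zero]

variable [FiniteDimensional ℂ L]

lemma active_c_one (hS1 : ∀ w, S.c w ≤ 1) {β : V} (hβ : β ∈ S.active) :
    S.c (S.τ β) = 1 := by
  have hlt : Module.finrank ℂ ↥(S.n ⊓ S.uSp (S.τ β)) < Module.finrank ℂ ↥(S.uSp (S.τ β)) := by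
    apply Submodule.finrank_lt_finrank_of_lt
    refine lt_of_le_of_ne inf_le_right ?_
    intro he
    exact hβ.2 (le_trans (le_trans (g_le_uSp S hβ.1) he.symm.le) inf_le_left)
  have := hS1 (S.τ β)
  unfold SphericalSetup.c at this ⊢
  omega

lemma preimage_eq (hS1 : ∀ w, S.c w ≤ 1) {β δ : V} (hβ : β ∈ S.active) (hδ : δ ∈ S.pos)
    (hδn : S.g δ ≤ S.n) (hact : δ + β ∈ S.active) {e : L} (he : e ∈ S.g δ) (he0 : e ≠ 0)
    {x : L} (hx : x ∈ S.uSp (S.τ β)) (hbr : ⁅e, x⁆ ∈ S.n) : x ∈ S.n := by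
  set M : Submodule ℂ L := S.uSp (S.τ β) ⊓ Submodule.comap (adE e) S.n with hM
  have hM1 : S.n ⊓ S.uSp (S.τ β) ≤ M := by
    intro z hz
    exact ⟨hz.2, S.n_bracket e (hδn he) z hz.1⟩
  obtain ⟨eβ, heβ, heβn, heβ0⟩ := exists_notmem_n S hβ
  have hbrne : ⁅e, eβ⁆ ≠ 0 := bracket_ne_zero S hδ hβ.1 hact.1 he he0 heβ heβ0
  have hbr_in : ⁅e, eβ⁆ ∈ S.g (δ + β) := S.bracket_mem δ β e he eβ heβ
  have hbr_notn : ⁅e, eβ⁆ ∉ S.n := notmem_n_of_mem_g S hact.1 hact.2 hbr_in hbrne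
  have heβM : eβ ∉ M := fun h => hbr_notn h.2
  have hMlt : M < S.uSp (S.τ β) :=
    lt_of_le_of_ne inf_le_left (fun h => heβM (h ▸ (g_le_uSp S hβ.1 heβ)))
  have h1 : Module.finrank ℂ ↥M < Module.finrank ℂ ↥(S.uSp (S.τ β)) :=
    Submodule.finrank_lt_finrank_of_lt hMlt
  have h2 := hS1 (S.τ β)
  unfold SphericalSetup.c at h2
  have h3 : Module.finrank ℂ ↥(S.n ⊓ S.uSp (S.τ β)) ≤ Module.finrank ℂ ↥M :=
    Submodule.finrank_mono hM1
  have heq : S.n ⊓ S.uSp (S.τ β) = M :=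
    Submodule.eq_of_le_of_finrank_le hM1 (by omega)
  have : x ∈ M := ⟨hx, hbr⟩
  rw [← heq] at this
  exact this.1

lemma zero_not_active (hS : S.Spherical) {μ : V} (hμ : μ ∈ S.active) (h0 : S.τ μ = 0) :
    False := by
  have h1 := active_c_one S hS.1 hμ
  rw [h0] at h1
  exact hS.2.ne_zero ⟨0, h1⟩ rfl

lemma fin2_dep (hS : S.Spherical) {u w : W} (hu : S.c u = 1) (hw : S.c w = 1)
    (hne : u ≠ w) (hrel : u = w + w) : False := by
  classical
  have hne' : (⟨u, hu⟩ : {w : W // S.c w = 1}) ≠ ⟨w, hw⟩ := by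
    intro h; exact hne (congrArg Subtype.val h)
  have key := linearIndependent_iff'.mp hS.2
    ({⟨u, hu⟩, ⟨w, hw⟩} : Finset {w : W // S.c w = 1})
    (fun i => if (i : W) = u then (1 : ℝ) else -2) ?_ ⟨u, hu⟩ (by simp)
  · simp at key
  · rw [Finset.sum_insert (by simp [hne'])]
    simp only [Finset.sum_singleton]
    simp only [if_true, if_neg (Ne.symm hne)]
    show (1 : ℝ) • u + (-2 : ℝ) • w = 0
    rw [hrel]; module

lemma fin3_dep (hS : S.Spherical) {u v w : W} (hu : S.c u = 1) (hv : S.c v = 1)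
    (hw : S.c w = 1) (huv : u ≠ v) (huw : u ≠ w) (hvw : v ≠ w) (hrel : u = v + w) :
    False := by
  classical
  have huv' : (⟨u, hu⟩ : {w : W // S.c w = 1}) ≠ ⟨v, hv⟩ := by
    intro h; exact huv (congrArg Subtype.val h)
  have huw' : (⟨u, hu⟩ : {w : W // S.c w = 1}) ≠ ⟨w, hw⟩ := by
    intro h; exact huw (congrArg Subtype.val h)
  have hvw' : (⟨v, hv⟩ : {w : W // S.c w = 1}) ≠ ⟨w, hw⟩ := by
    intro h; exact hvw (congrArg Subtype.val h)
  have key := linearIndependent_iff'.mp hS.2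
    ({⟨u, hu⟩, ⟨v, hv⟩, ⟨w, hw⟩} : Finset {w : W // S.c w = 1})
    (fun i => if (i : W) = u then (1 : ℝ) else -1) ?_ ⟨u, hu⟩ (by simp)
  · simp at key
  · rw [Finset.sum_insert (by simp [huv', huw'])]
    rw [Finset.sum_insert (by simp [hvw'])]
    simp only [Finset.sum_singleton]
    simp only [if_true, if_neg (Ne.symm huv), if_neg (Ne.symm huw)]
    show (1 : ℝ) • u + ((-1 : ℝ) • v + (-1 : ℝ) • w) = 0
    rw [hrel]; module

/-- The "exactly one active" lemma: if `α = δ + β` with `α, β` active then `δ` is not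
active. -/
lemma not_active_of_sum (hS : S.Spherical) {α β δ : V} (hα : α ∈ S.active)
    (hβ : β ∈ S.active) (hsum : δ + β = α) (hδact : δ ∈ S.active) : False := by
  have cu := active_c_one S hS.1 hα
  have cw := active_c_one S hS.1 hβ
  have cv := active_c_one S hS.1 hδact
  have huvw : S.τ α = S.τ δ + S.τ β := by rw [← hsum, map_add]
  by_cases hv0 : S.τ δ = 0
  · exact zero_not_active S hS hδact hv0
  by_cases hw0 : S.τ β = 0
  · exact zero_not_active S hS hβ hw0
  by_cases hvw : S.τ δ = S.τ β
  · refine fin2_dep S hS cu cw ?_ ?_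
    · intro h
      rw [h] at huvw
      exact hv0 (by rwa [right_eq_add] at huvw)
    · rw [huvw, hvw]
  · refine fin3_dep S hS cu cv cw ?_ ?_ hvw huvw
    · intro h
      rw [h] at huvw
      exact hw0 (by rwa [left_eq_add] at huvw)
    · intro h
      rw [h] at huvw
      exact hv0 (by rwa [right_eq_add] at huvw)

lemma g_ne_bot {μ : V} (hμ : μ ∈ S.pos) : ∃ e ∈ S.g μ, e ≠ 0 := by
  rw [← Submodule.ne_bot_iff]
  intro h
  have := S.g_dim μ hμ
  rw [h] at this
  simp at this

/-- Main contradiction, case of two active roots differing by a positive root of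
trivial restriction. -/
lemma ML0 (hS : S.Spherical) {β γ η : V} (hβ : β ∈ S.active) (hγ : γ ∈ S.active)
    (hτ : S.τ β = S.τ γ) (hη : η ∈ S.pos) (hsum : η + β = γ) : False := by
  have hτη : S.τ η = 0 := by
    have h1 : S.τ η + S.τ β = S.τ γ := by rw [← map_add, hsum]
    rw [hτ, add_eq_right] at h1
    exact h1
  have hηn : S.g η ≤ S.n := by
    by_contra h
    exact zero_not_active S hS ⟨hη, h⟩ hτη
  obtain ⟨e, he, he0⟩ := g_ne_bot S hη
  have key : ∀ x ∈ S.uSp (S.τ β), ⁅e, x⁆ ∈ S.n → x ∈ S.n := fun x hx h =>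
    preimage_eq S hS.1 hβ hη hηn (hsum ▸ hγ) he he0 hx h
  obtain ⟨eβ, heβ, heβn, heβ0⟩ := exists_notmem_n S hβ
  set f : ℕ → L := fun k => (fun x => ⁅e, x⁆)^[k] eβ with hf
  have hf0 : f 0 = eβ := rfl
  have hfs : ∀ k, f (k + 1) = ⁅e, f k⁆ := fun k => Function.iterate_succ_apply' _ _ _
  have hA1 : ∀ k, f k ∈ S.uSp (S.τ β) := by
    intro k
    induction k with
    | zero => rw [hf0]; exact g_le_uSp S hβ.1 heβ
    | succ k ih =>
      rw [hfs k]
      have := bracket_mem_uSp S he ih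
      rwa [hτη, zero_add] at this
  have hA2 : ∀ k, f k ∈ S.g (β + k • η) := by
    intro k
    induction k with
    | zero => rw [hf0]; simpa using heβ
    | succ k ih =>
      rw [hfs k]
      have := S.bracket_mem η (β + k • η) e he _ ih
      have heq : η + (β + k • η) = β + (k + 1) • η := by
        rw [succ_nsmul]; abel
      rwa [heq] at this
  have hN : ∃ N : ℕ, β + N • η ∉ S.pos := by
    by_contra h
    push_neg at h
    have hηne : η ≠ 0 := S.ne_zero η hη.1
    have hfin : S.pos.Finite := S.finite.subset fun x hx => hx.1
    refine hfin.not_infinite (Set.infinite_of_injective_forall_mem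
      (f := fun N : ℕ => β + N • η) ?_ h)
    intro a b hab
    have h1 : (a : ℝ) • η = (b : ℝ) • η := by
      rw [Nat.cast_smul_eq_nsmul, Nat.cast_smul_eq_nsmul]
      exact add_left_cancel hab
    have h2 : ((a : ℝ) - (b : ℝ)) • η = 0 := by rw [sub_smul, h1, sub_self]
    rcases smul_eq_zero.mp h2 with h3 | h3
    · have : (a : ℝ) = (b : ℝ) := by linarith [sub_eq_zero.mp h3]
      exact_mod_cast this
    · exact absurd h3 hηne
  obtain ⟨N, hNpos⟩ := hN
  have hfN : f N = 0 := by
    have := hA2 N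
    rw [S.g_bot _ hNpos] at this
    simpa using this
  have descend : ∀ k, f k ∈ S.n → eβ ∈ S.n := by
    intro k
    induction k with
    | zero => intro h; rwa [hf0] at h
    | succ k ih =>
      intro h
      rw [hfs k] at h
      exact ih (key _ (hA1 k) h)
  exact heβn (descend N (by rw [hfN]; exact S.n.zero_mem))

/-- Main contradiction, case where `δ + γ` is not a positive root. -/
lemma MLdelta (hS : S.Spherical) {α β γ δ : V} (hα : α ∈ S.active) (hβ : β ∈ S.active)
    (hγ : γ ∈ S.active) (hτ : S.τ β = S.τ γ) (hδ : δ ∈ S.pos) (hsum : δ + β = α)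
    (hnot : δ + γ ∉ S.pos) : False := by
  have hδn : S.g δ ≤ S.n := by
    by_contra h
    exact not_active_of_sum S hS hα hβ hsum ⟨hδ, h⟩
  obtain ⟨e, he, he0⟩ := g_ne_bot S hδ
  obtain ⟨eγ, heγ, heγn, heγ0⟩ := exists_notmem_n S hγ
  have h1 : eγ ∈ S.uSp (S.τ β) := by
    rw [hτ]
    exact g_le_uSp S hγ.1 heγ
  have h2 : ⁅e, eγ⁆ = 0 := by
    have := S.bracket_mem δ γ e he eγ heγ
    rw [S.g_bot _ hnot] at this
    simpa using this
  exact heγn (preimage_eq S hS.1 hβ hδ hδn (hsum ▸ hα) he he0 h1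
    (by rw [h2]; exact S.n.zero_mem))

end AuxLie

/-- Let `H` be a connected solvable spherical subgroup of `G` standardly embedded in `B`
and `α` an active root.  Then the distinct roots of the family `F(α)` have pairwise
distinct restrictions to the maximal torus `S` of `H`, and the roots of `F(α)` are
linearly independent. -/
theorem family_tau_injOn_and_linearIndependent
    {V : Type} [NormedAddCommGroup V] [InnerProductSpace ℝ V]
    {W : Type} [AddCommGroup W] [Module ℝ W]
    {L : Type} [LieRing L] [LieAlgebra ℂ L] [FiniteDimensional ℂ L]
    (S : SphericalSetup V W L) (hS : S.Spherical)
    {α : V} (hα : α ∈ S.active) :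
    Set.InjOn S.τ (S.family α) ∧
      LinearIndependent ℝ (fun β : S.family α => (β : V)) := by
  have hmem_active : ∀ β ∈ S.family α, β ∈ S.active := by
    intro β hβ
    rcases Set.mem_insert_iff.mp hβ with h | h
    · exact h ▸ hα
    · exact h.1
  have hinj : Set.InjOn S.τ (S.family α) := by
    intro β hβm γ hγm hτeq
    by_contra hne
    have hβa := hmem_active β hβm
    have hγa := hmem_active γ hγm
    rcases Set.mem_insert_iff.mp hβm with hβα | hβs
    · rcases Set.mem_insert_iff.mp hγm with hγα | hγs
      · exact hne (hβα.trans hγα.symm)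
      · subst hβα
        refine ML0 S hS hγa hβa ?_ hγs.2 (by abel)
        rw [hτeq]
    · rcases Set.mem_insert_iff.mp hγm with hγα | hγs
      · subst hγα
        exact ML0 S hS hβa hγa hτeq hβs.2 (by abel)
      · -- both subordinate
        have hδpos : α - β ∈ S.pos := hβs.2
        have hδ'pos : α - γ ∈ S.pos := hγs.2
        by_cases hp : γ - β ∈ S.pos
        · exact ML0 S hS hβa hγa hτeq hp (by abel)
        by_cases hp' : β - γ ∈ S.pos
        · exact ML0 S hS hγa hβa hτeq.symm hp' (by abel)
        have hηne : γ - β ≠ 0 := fun h0 => hne (sub_eq_zero.mp h0).symm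
        have hr1 : γ - β ∉ S.roots := by
          intro h
          rcases S.pos_or_neg_pos h with h' | h'
          · exact hp h'
          · rw [neg_sub] at h'
            exact hp' h'
        by_cases hq : α + (γ - β) ∈ S.roots
        · by_cases hq' : α - (γ - β) ∈ S.roots
          · rcases S.pm_mem_of_string hα.1.1 hηne hq hq' with h | h
            · exact hr1 h
            · rw [neg_sub] at h
              have := S.neg_mem _ h
              rw [neg_sub] at this
              exact hr1 this
          · refine MLdelta S hS hα hγa hβa hτeq.symm hδ'pos (by abel) ?_
            intro hpp
            apply hq'
            have : (α - γ) + β = α - (γ - β) := by abel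
            exact this ▸ hpp.1
        · refine MLdelta S hS hα hβa hγa hτeq hδpos (by abel) ?_
          intro hpp
          apply hq
          have : (α - β) + γ = α + (γ - β) := by abel
          exact this ▸ hpp.1
  refine ⟨hinj, ?_⟩
  have hc1 : ∀ β : S.family α, S.c (S.τ (β : V)) = 1 := fun β =>
    active_c_one S hS.1 (hmem_active (β : V) β.2)
  have hinj2 : Function.Injective
      (fun β : S.family α => (⟨S.τ (β : V), hc1 β⟩ : {w : W // S.c w = 1})) := by
    intro β γ hbg
    exact Subtype.ext (hinj β.2 γ.2 (congrArg Subtype.val hbg))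
  have li := hS.2.comp _ hinj2
  exact LinearIndependent.of_comp S.τ li
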